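/- Let K and L be convex bodies in R^n of the same volume, both in M-position with constant β (i.e., max{N(K̃, rB), N(rB, K̃), N(K̃°, sB), N(sB, K̃°)} ≤ e^{βn} for appropriately normalized balls). Then N(K, tL)^{1/n} ≍ N(L, tK)^{1/n} for every t > 0, up to constants depending only on β. -/

import Mathlib

open MeasureTheory Set
open scoped Pointwise RealInnerProductSpace

/-- Covering number: the least `N` such that `A` is covered by `N` translates of `B`. -/
noncomputable def covN {n : ℕ} (A B : Set (EuclideanSpace ℝ (Fin n))) : ℕ :=
  sInf {N : ℕ | ∃ F : Finset (EuclideanSpace ℝ (Fin n)), F.card = N ∧ A ⊆ ⋃ c ∈ F, c +ᵥ B}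

/-- The polar body `K° = {y : ⟨x,y⟩ ≤ 1 for all x ∈ K}`. -/
def polarBody {n : ℕ} (K : Set (EuclideanSpace ℝ (Fin n))) : Set (EuclideanSpace ℝ (Fin n)) :=
  {y | ∀ x ∈ K, ⟪x, y⟫ ≤ 1}

/-- `K` is in `M`-position with constant `β`: `K` has the volume of the Euclidean unit ball
and the four covering numbers of `K`, `K°` with `B₂ⁿ` are at most `e^{βn}`. -/
noncomputable def MPosition {n : ℕ} (β : ℝ) (K : Set (EuclideanSpace ℝ (Fin n))) : Prop :=
  volume K = volume (Metric.closedBall (0 : EuclideanSpace ℝ (Fin n)) 1) ∧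
  (covN K (Metric.closedBall (0 : EuclideanSpace ℝ (Fin n)) 1) : ℝ) ≤ Real.exp (β * n) ∧
  (covN (Metric.closedBall (0 : EuclideanSpace ℝ (Fin n)) 1) K : ℝ) ≤ Real.exp (β * n) ∧
  (covN (polarBody K) (Metric.closedBall (0 : EuclideanSpace ℝ (Fin n)) 1) : ℝ) ≤
    Real.exp (β * n) ∧
  (covN (Metric.closedBall (0 : EuclideanSpace ℝ (Fin n)) 1) (polarBody K) : ℝ) ≤
    Real.exp (β * n)

open scoped ENNReal

namespace Stmt19Aux

variable {n : ℕ}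

lemma covN_le_card {A B : Set (EuclideanSpace ℝ (Fin n))}
    {F : Finset (EuclideanSpace ℝ (Fin n))} (h : A ⊆ ⋃ c ∈ F, c +ᵥ B) :
    covN A B ≤ F.card :=
  Nat.sInf_le ⟨F, rfl, h⟩

/-- If `A` is compact and `B` has nonempty interior, an optimal finite cover exists. -/
lemma exists_cover {A B : Set (EuclideanSpace ℝ (Fin n))} (hA : IsCompact A)
    (hB : (interior B).Nonempty) :
    ∃ F : Finset (EuclideanSpace ℝ (Fin n)), F.card = covN A B ∧ A ⊆ ⋃ c ∈ F, c +ᵥ B := by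
  classical
  have hne : {N : ℕ | ∃ F : Finset (EuclideanSpace ℝ (Fin n)),
      F.card = N ∧ A ⊆ ⋃ c ∈ F, c +ᵥ B}.Nonempty := by
    obtain ⟨b, hb⟩ := hB
    have hsub : A ⊆ ⋃ a ∈ A, ((a - b) +ᵥ interior B) := by
      intro a ha
      refine Set.mem_biUnion ha ?_
      rw [Set.mem_vadd_set]
      exact ⟨b, hb, by rw [vadd_eq_add, sub_add_cancel]⟩
    obtain ⟨b', hb'A, hb'fin, hb'cov⟩ :=
      hA.elim_finite_subcover_image (fun a _ => isOpen_interior.vadd _) hsub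
    refine ⟨(hb'fin.toFinset.image (fun a => a - b)).card,
      hb'fin.toFinset.image (fun a => a - b), rfl, ?_⟩
    intro x hx
    obtain ⟨a, ha, hxa⟩ := by simpa using hb'cov hx
    refine Set.mem_biUnion (Finset.mem_image.mpr ⟨a, by simpa using ha, rfl⟩) ?_
    exact Set.vadd_set_mono interior_subset hxa
  obtain ⟨F, h1, h2⟩ := Nat.sInf_mem hne
  exact ⟨F, h1, h2⟩

/-- Composition of covers. -/
lemma cover_trans {A B C : Set (EuclideanSpace ℝ (Fin n))}
    {F G : Finset (EuclideanSpace ℝ (Fin n))}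
    (hF : A ⊆ ⋃ c ∈ F, c +ᵥ B) (hG : B ⊆ ⋃ d ∈ G, d +ᵥ C) :
    ∃ H : Finset (EuclideanSpace ℝ (Fin n)),
      H.card ≤ F.card * G.card ∧ A ⊆ ⋃ e ∈ H, e +ᵥ C := by
  classical
  refine ⟨(F ×ˢ G).image (fun p => p.1 + p.2), ?_, ?_⟩
  · exact Finset.card_image_le.trans (le_of_eq (Finset.card_product F G))
  · intro a ha
    obtain ⟨c, hcF, hac⟩ := by simpa using hF ha
    rw [Set.mem_vadd_set] at hac
    obtain ⟨b, hbB, hcb⟩ := hac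
    obtain ⟨d, hdG, hbd⟩ := by simpa using hG hbB
    rw [Set.mem_vadd_set] at hbd
    obtain ⟨e, heC, hde⟩ := hbd
    refine Set.mem_biUnion (Finset.mem_image.mpr ⟨(c, d),
      Finset.mem_product.mpr ⟨hcF, hdG⟩, rfl⟩) ?_
    rw [Set.mem_vadd_set]
    refine ⟨e, heC, ?_⟩
    simp only [vadd_eq_add] at *
    rw [← hcb, ← hde]; abel

/-- Scaling a cover. -/
lemma cover_smul {B C : Set (EuclideanSpace ℝ (Fin n))}
    {G : Finset (EuclideanSpace ℝ (Fin n))} (t : ℝ)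
    (hG : B ⊆ ⋃ d ∈ G, d +ᵥ C) :
    ∃ G' : Finset (EuclideanSpace ℝ (Fin n)),
      G'.card ≤ G.card ∧ t • B ⊆ ⋃ d ∈ G', d +ᵥ t • C := by
  classical
  refine ⟨G.image (t • ·), Finset.card_image_le, ?_⟩
  rintro x hx
  rw [Set.mem_smul_set] at hx
  obtain ⟨b, hb, rfl⟩ := hx
  obtain ⟨d, hdG, hbd⟩ := by simpa using hG hb
  rw [Set.mem_vadd_set] at hbd
  obtain ⟨c, hcC, hdc⟩ := hbd
  refine Set.mem_biUnion (Finset.mem_image.mpr ⟨d, hdG, rfl⟩) ?_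
  rw [Set.mem_vadd_set]
  refine ⟨t • c, Set.smul_mem_smul_set hcC, ?_⟩
  simp only [vadd_eq_add] at *
  rw [← hdc, smul_add]

lemma volume_le_of_cover {A B : Set (EuclideanSpace ℝ (Fin n))}
    {F : Finset (EuclideanSpace ℝ (Fin n))} (h : A ⊆ ⋃ c ∈ F, c +ᵥ B) :
    volume A ≤ (F.card : ℝ≥0∞) * volume B := by
  calc volume A ≤ ∑ c ∈ F, volume (c +ᵥ B) :=
        (measure_mono h).trans (measure_biUnion_finset_le F _)
    _ = (F.card : ℝ≥0∞) * volume B := by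
        simp [measure_vadd, Finset.sum_const, nsmul_eq_mul]

/-- Packing bound: the unit ball is covered by at most `(1+2/t)^n` translates of `t·B`. -/
lemma packing (hn : 0 < n) {t : ℝ} (ht : 0 < t) :
    ∃ F : Finset (EuclideanSpace ℝ (Fin n)),
      ((F.card : ℝ) ≤ (1 + 2 / t) ^ n) ∧
      Metric.closedBall 0 1 ⊆
        ⋃ c ∈ F, c +ᵥ (t • Metric.closedBall (0 : EuclideanSpace ℝ (Fin n)) 1) := by
  classical
  have hscale : t • Metric.closedBall (0 : EuclideanSpace ℝ (Fin n)) 1 =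
      Metric.closedBall (0 : EuclideanSpace ℝ (Fin n)) t := by
    rw [smul_closedBall _ _ zero_le_one, smul_zero, Real.norm_eq_abs, abs_of_pos ht, mul_one]
  have ht2 : (0 : ℝ) < t / 2 := by linarith
  -- volume bound for separated sets
  have cardBound : ∀ S : Finset (EuclideanSpace ℝ (Fin n)),
      (↑S ⊆ Metric.closedBall (0 : EuclideanSpace ℝ (Fin n)) 1) →
      (∀ x ∈ S, ∀ y ∈ S, x ≠ y → t < dist x y) →
      (S.card : ℝ) ≤ (1 + 2 / t) ^ n := by
    intro S hS1 hS2
    have hdisj : (↑S : Set (EuclideanSpace ℝ (Fin n))).PairwiseDisjoint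
        (fun s => Metric.closedBall s (t / 2)) := by
      intro x hx y hy hxy
      exact Metric.closedBall_disjoint_closedBall (by linarith [hS2 x hx y hy hxy])
    have hsum : ∑ s ∈ S, volume (Metric.closedBall s (t / 2)) =
        volume (⋃ s ∈ S, Metric.closedBall s (t / 2)) :=
      (measure_biUnion_finset hdisj (fun _ _ => measurableSet_closedBall)).symm
    have hball : ∀ s : EuclideanSpace ℝ (Fin n), volume (Metric.closedBall s (t / 2)) =
        ENNReal.ofReal ((t / 2) ^ n) *
          volume (Metric.ball (0 : EuclideanSpace ℝ (Fin n)) 1) := by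
      intro s
      rw [Measure.addHaar_closedBall _ _ ht2.le, finrank_euclideanSpace_fin]
    have hsub : (⋃ s ∈ S, Metric.closedBall s (t / 2)) ⊆
        Metric.closedBall (0 : EuclideanSpace ℝ (Fin n)) (1 + t / 2) := by
      intro x hx
      simp only [Set.mem_iUnion, exists_prop] at hx
      obtain ⟨s, hsS, hxs⟩ := hx
      have hxs' : dist x s ≤ t / 2 := Metric.mem_closedBall.mp hxs
      have hs1 : dist s (0 : EuclideanSpace ℝ (Fin n)) ≤ 1 :=
        Metric.mem_closedBall.mp (hS1 hsS)
      have htri : dist x (0 : EuclideanSpace ℝ (Fin n)) ≤ dist x s + dist s 0 :=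
        dist_triangle _ _ _
      rw [Metric.mem_closedBall]
      linarith
    have hbig : volume (Metric.closedBall (0 : EuclideanSpace ℝ (Fin n)) (1 + t / 2)) =
        ENNReal.ofReal ((1 + t / 2) ^ n) *
          volume (Metric.ball (0 : EuclideanSpace ℝ (Fin n)) 1) := by
      rw [Measure.addHaar_closedBall _ _ (by linarith), finrank_euclideanSpace_fin]
    have key : (S.card : ℝ≥0∞) * (ENNReal.ofReal ((t / 2) ^ n) *
        volume (Metric.ball (0 : EuclideanSpace ℝ (Fin n)) 1))
        ≤ ENNReal.ofReal ((1 + t / 2) ^ n) *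
          volume (Metric.ball (0 : EuclideanSpace ℝ (Fin n)) 1) := by
      calc (S.card : ℝ≥0∞) * (ENNReal.ofReal ((t / 2) ^ n) *
            volume (Metric.ball (0 : EuclideanSpace ℝ (Fin n)) 1))
          = ∑ s ∈ S, volume (Metric.closedBall s (t / 2)) := by
            rw [Finset.sum_congr rfl (fun s _ => hball s), Finset.sum_const, nsmul_eq_mul]
        _ = volume (⋃ s ∈ S, Metric.closedBall s (t / 2)) := hsum
        _ ≤ volume (Metric.closedBall (0 : EuclideanSpace ℝ (Fin n)) (1 + t / 2)) :=
            measure_mono hsub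
        _ = _ := hbig
    have hV0 : volume (Metric.ball (0 : EuclideanSpace ℝ (Fin n)) 1) ≠ 0 :=
      (Metric.measure_ball_pos volume 0 one_pos).ne'
    have hVtop : volume (Metric.ball (0 : EuclideanSpace ℝ (Fin n)) 1) ≠ ⊤ :=
      measure_ball_lt_top.ne
    rw [← mul_assoc] at key
    have key2 : (S.card : ℝ≥0∞) * ENNReal.ofReal ((t / 2) ^ n) ≤
        ENNReal.ofReal ((1 + t / 2) ^ n) :=
      (ENNReal.mul_le_mul_iff_left hV0 hVtop).mp key
    have key3 : (S.card : ℝ) * (t / 2) ^ n ≤ (1 + t / 2) ^ n := by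
      rw [show ((S.card : ℝ≥0∞)) = ENNReal.ofReal (S.card : ℝ) by
            rw [ENNReal.ofReal_natCast],
          ← ENNReal.ofReal_mul (by positivity)] at key2
      exact (ENNReal.ofReal_le_ofReal_iff (by positivity)).mp key2
    have hfact : (1 + t / 2 : ℝ) = (1 + 2 / t) * (t / 2) := by field_simp; ring
    rw [hfact, mul_pow] at key3
    exact le_of_mul_le_mul_right key3 (pow_pos ht2 n)
  -- maximal separated set
  set P : Set ℕ := {m | ∃ S : Finset (EuclideanSpace ℝ (Fin n)), S.card = m ∧
    (↑S ⊆ Metric.closedBall (0 : EuclideanSpace ℝ (Fin n)) 1) ∧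
    (∀ x ∈ S, ∀ y ∈ S, x ≠ y → t < dist x y)} with hP
  have hP0 : 0 ∈ P := ⟨∅, rfl, by simp, by simp⟩
  have hPbdd : BddAbove P := by
    refine ⟨Nat.floor ((1 + 2 / t) ^ n : ℝ), ?_⟩
    rintro m ⟨S, rfl, h1, h2⟩
    exact Nat.le_floor (cardBound S h1 h2)
  obtain ⟨S, hScard, hSsub, hSsep⟩ := Nat.sSup_mem ⟨0, hP0⟩ hPbdd
  refine ⟨S, cardBound S hSsub hSsep, ?_⟩
  intro x hx
  by_contra hcon
  simp only [Set.mem_iUnion, exists_prop, not_exists, not_and] at hcon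
  have hfar : ∀ s ∈ S, t < dist x s := by
    intro s hs
    by_contra hle
    push_neg at hle
    refine hcon s hs ?_
    rw [hscale, Metric.vadd_closedBall, vadd_eq_add, add_zero]
    exact Metric.mem_closedBall.mpr hle
  have hxS : x ∉ S := by
    intro hxS
    have := hfar x hxS
    rw [dist_self] at this
    linarith
  have hsep' : ∀ a ∈ insert x S, ∀ b ∈ insert x S, a ≠ b → t < dist a b := by
    intro a ha b hb hab
    rcases Finset.mem_insert.mp ha with rfl | haS
    · rcases Finset.mem_insert.mp hb with rfl | hbS
      · exact absurd rfl hab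
      · exact hfar b hbS
    · rcases Finset.mem_insert.mp hb with rfl | hbS
      · rw [dist_comm]; exact hfar a haS
      · exact hSsep a haS b hbS hab
  have hmem : (insert x S).card ∈ P := by
    refine ⟨insert x S, rfl, ?_, hsep'⟩
    rw [Finset.coe_insert]
    exact Set.insert_subset hx hSsub
  have hle' : (insert x S).card ≤ sSup P := le_csSup hPbdd hmem
  rw [Finset.card_insert_of_notMem hxS, hScard] at hle'
  omega

end Stmt19Aux

open Stmt19Aux in
/-- One-sided comparison lemma (symmetric in `K`, `L`). -/
lemma main_ineq {n : ℕ} (hn : 0 < n) (β : ℝ)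
    (K L : Set (EuclideanSpace ℝ (Fin n)))
    (hKc : IsCompact K) (hKi : (interior K).Nonempty)
    (hLc : IsCompact L) (hLi : (interior L).Nonempty)
    (hvol : volume K = volume L) (hK : MPosition β K) (hL : MPosition β L)
    (t : ℝ) (ht : 0 < t) :
    ((covN K (t • L) : ℝ)) ^ ((1 : ℝ) / n) ≤
      (3 * Real.exp (2 * β)) * ((covN L (t • K) : ℝ)) ^ ((1 : ℝ) / n) := by
  have hB1i : (interior (Metric.closedBall (0 : EuclideanSpace ℝ (Fin n)) 1)).Nonempty := by
    refine ⟨0, ?_⟩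
    rw [interior_closedBall _ one_ne_zero]
    exact Metric.mem_ball_self one_pos
  have hB1c : IsCompact (Metric.closedBall (0 : EuclideanSpace ℝ (Fin n)) 1) :=
    isCompact_closedBall 0 1
  -- covers
  obtain ⟨F, hFcard, hFcov⟩ := exists_cover hKc hB1i
  have hFb : (F.card : ℝ) ≤ Real.exp (β * n) := by rw [hFcard]; exact hK.2.1
  obtain ⟨G, hGcard, hGcov⟩ := exists_cover hB1c hLi
  have hGb : (G.card : ℝ) ≤ Real.exp (β * n) := by rw [hGcard]; exact hL.2.2.1
  obtain ⟨H, hHb, hHcov⟩ := packing hn ht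
  obtain ⟨G', hG'card, hG'cov⟩ := cover_smul t hGcov
  -- compose
  obtain ⟨H₂, hH₂card, hH₂cov⟩ := cover_trans hFcov hHcov
  obtain ⟨H₃, hH₃card, hH₃cov⟩ := cover_trans hH₂cov hG'cov
  have hN1 : covN K (t • L) ≤ F.card * H.card * G.card := by
    calc covN K (t • L) ≤ H₃.card := covN_le_card hH₃cov
      _ ≤ H₂.card * G'.card := hH₃card
      _ ≤ (F.card * H.card) * G.card := Nat.mul_le_mul hH₂card hG'card
  have hexp : Real.exp (β * n) = Real.exp β ^ n := by
    rw [mul_comm, Real.exp_nat_mul]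
  have hN1R : ((covN K (t • L) : ℝ)) ≤ (Real.exp (2 * β) * (1 + 2 / t)) ^ n := by
    have h1 : ((covN K (t • L) : ℝ)) ≤ (F.card : ℝ) * (H.card : ℝ) * (G.card : ℝ) := by
      exact_mod_cast Nat.cast_le.mpr hN1
    have h2 : (F.card : ℝ) * (H.card : ℝ) * (G.card : ℝ) ≤
        Real.exp (β * n) * (1 + 2 / t) ^ n * Real.exp (β * n) := by
      have h2t : (0:ℝ) ≤ 1 + 2 / t := by positivity
      apply mul_le_mul (mul_le_mul hFb hHb (by positivity) (Real.exp_pos _).le)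
        hGb (by positivity)
      positivity
    have h3 : Real.exp (β * n) * (1 + 2 / t) ^ n * Real.exp (β * n) =
        (Real.exp (2 * β) * (1 + 2 / t)) ^ n := by
      have he2 : Real.exp (2 * β) = Real.exp β * Real.exp β := by
        rw [two_mul, Real.exp_add]
      rw [he2, hexp, mul_pow, mul_pow]
      ring
    linarith
  -- lower bounds for covN L (t • K)
  have htKi : (interior (t • K)).Nonempty := by
    rw [interior_smul₀ ht.ne' K]
    exact hKi.smul_set
  obtain ⟨F₂, hF₂card, hF₂cov⟩ := exists_cover hLc htKi
  have hLne : L.Nonempty := ⟨hLi.choose, interior_subset hLi.choose_spec⟩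
  have hN2one : 1 ≤ covN L (t • K) := by
    rw [← hF₂card]
    rcases Nat.eq_zero_or_pos F₂.card with h0 | h1
    · exfalso
      rw [Finset.card_eq_zero] at h0
      subst h0
      simpa using hF₂cov hLne.choose_spec
    · exact h1
  have hLvol0 : volume L ≠ 0 := by
    have hpos := isOpen_interior.measure_pos (μ := volume) hLi
    intro h
    have : volume (interior L) = 0 :=
      le_antisymm (h ▸ measure_mono interior_subset) (zero_le')
    exact hpos.ne' this
  have hLvoltop : volume L ≠ ⊤ := hLc.measure_lt_top.ne
  have hN2vol : 1 ≤ ((covN L (t • K) : ℝ)) * t ^ n := by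
    have hcov := volume_le_of_cover hF₂cov
    rw [hF₂card] at hcov
    have hsm : volume (t • K) = ENNReal.ofReal (t ^ n) * volume L := by
      rw [Measure.addHaar_smul, hvol, finrank_euclideanSpace_fin,
        abs_of_pos (pow_pos ht n)]
    rw [hsm, ← mul_assoc] at hcov
    have hc1 : (1 : ℝ≥0∞) * volume L ≤
        (((covN L (t • K) : ℕ) : ℝ≥0∞) * ENNReal.ofReal (t ^ n)) * volume L := by
      rwa [one_mul]
    have h1 : (1 : ℝ≥0∞) ≤ ((covN L (t • K) : ℕ) : ℝ≥0∞) * ENNReal.ofReal (t ^ n) :=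
      (ENNReal.mul_le_mul_iff_left hLvol0 hLvoltop).mp hc1
    rw [show (((covN L (t • K) : ℕ) : ℝ≥0∞)) = ENNReal.ofReal ((covN L (t • K) : ℝ)) by
          rw [ENNReal.ofReal_natCast],
        ← ENNReal.ofReal_mul (by positivity)] at h1
    exact ENNReal.one_le_ofReal.mp h1
  -- rpow computations
  have hnR : (0:ℝ) < n := by exact_mod_cast hn
  have hp : (0:ℝ) ≤ 1 / n := by positivity
  have hpow_root : ∀ c : ℝ, 0 ≤ c → ((c ^ n : ℝ)) ^ ((1:ℝ)/n) = c := by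
    intro c hc
    rw [← Real.rpow_natCast c n, ← Real.rpow_mul hc]
    rw [mul_one_div, div_self hnR.ne', Real.rpow_one]
  have hN1nn : (0:ℝ) ≤ (covN K (t • L) : ℝ) := Nat.cast_nonneg _
  have hup : ((covN K (t • L) : ℝ)) ^ ((1:ℝ)/n) ≤ Real.exp (2 * β) * (1 + 2 / t) := by
    have := Real.rpow_le_rpow hN1nn hN1R hp
    rwa [hpow_root _ (by positivity)] at this
  have hlow1 : (1:ℝ) ≤ ((covN L (t • K) : ℝ)) ^ ((1:ℝ)/n) := by
    have h1 : (1:ℝ) ≤ ((covN L (t • K) : ℝ)) := by exact_mod_cast hN2one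
    calc (1:ℝ) = (1:ℝ) ^ ((1:ℝ)/n) := (Real.one_rpow _).symm
      _ ≤ ((covN L (t • K) : ℝ)) ^ ((1:ℝ)/n) := Real.rpow_le_rpow zero_le_one h1 hp
  have hlow2 : 1 / t ≤ ((covN L (t • K) : ℝ)) ^ ((1:ℝ)/n) := by
    have h2 : ((1 / t : ℝ)) ^ n ≤ ((covN L (t • K) : ℝ)) := by
      rw [div_pow, one_pow, div_le_iff₀ (pow_pos ht n)]
      linarith
    have := Real.rpow_le_rpow (by positivity) h2 hp
    rwa [hpow_root _ (by positivity)] at this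
  have hmax : 1 + 2 / t ≤ 3 * ((covN L (t • K) : ℝ)) ^ ((1:ℝ)/n) := by
    rcases le_total 1 t with h | h
    · have h2t : 2 / t ≤ 2 := by
        rw [div_le_iff₀ ht]; linarith
      linarith
    · have h1t : (1:ℝ) ≤ 1 / t := by
        rw [le_div_iff₀ ht]; linarith
      have h2t : 2 / t = 2 * (1 / t) := by ring
      have : 1 + 2 / t ≤ 3 * (1 / t) := by rw [h2t]; linarith
      linarith
  calc ((covN K (t • L) : ℝ)) ^ ((1:ℝ)/n) ≤ Real.exp (2 * β) * (1 + 2 / t) := hup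
    _ ≤ Real.exp (2 * β) * (3 * ((covN L (t • K) : ℝ)) ^ ((1:ℝ)/n)) :=
        mul_le_mul_of_nonneg_left hmax (Real.exp_pos _).le
    _ = (3 * Real.exp (2 * β)) * ((covN L (t • K) : ℝ)) ^ ((1:ℝ)/n) := by ring

/-- If `K` and `L` are convex bodies in ℝⁿ of the same volume, both in
`M`-position with constant `β`, then `N(K, tL)^{1/n} ≍ N(L, tK)^{1/n}` for every `t > 0`,
up to constants depending only on `β`. -/
theorem statement19 (β : ℝ) (hβ : 0 < β) :
    ∃ c₁ c₂ : ℝ, 0 < c₁ ∧ 0 < c₂ ∧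
      ∀ (n : ℕ), 0 < n → ∀ K L : Set (EuclideanSpace ℝ (Fin n)),
        Convex ℝ K → IsCompact K → (interior K).Nonempty →
        Convex ℝ L → IsCompact L → (interior L).Nonempty →
        volume K = volume L → MPosition β K → MPosition β L →
        ∀ t : ℝ, 0 < t →
          c₁ * (covN L (t • K) : ℝ) ^ ((1 : ℝ) / n) ≤ (covN K (t • L) : ℝ) ^ ((1 : ℝ) / n) ∧
          (covN K (t • L) : ℝ) ^ ((1 : ℝ) / n) ≤ c₂ * (covN L (t • K) : ℝ) ^ ((1 : ℝ) / n) := by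
  refine ⟨(3 * Real.exp (2 * β))⁻¹, 3 * Real.exp (2 * β), by positivity, by positivity,
    fun n hn K L hKconv hKc hKi hLconv hLc hLi hvol hK hL t ht => ⟨?_, ?_⟩⟩
  · have h := main_ineq hn β L K hLc hLi hKc hKi hvol.symm hL hK t ht
    rw [inv_mul_le_iff₀ (by positivity)]
    exact h
  · exact main_ineq hn β K L hKc hKi hLc hLi hvol hK hL t ht
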